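/- arXiv:1812.08702 — 2 statements merged into one kernel-verified Lean document; each statement's English description precedes it below -/
import Mathlib

section
/- The generating function of the partition function EO-bar satisfies the identity ∑_{n≥0} EO-bar(n) q^n = (q^4;q^4)_∞^3 / (q^2;q^2)_∞^2, where EO-bar(n) counts partitions of n in which every even part is less than each odd part and only the largest even part appears an odd number of times. -/
open PowerSeries

/-- `(q^a; q^c)_∞ = ∏_{i ≥ 0} (1 - q^{a + c·i})` as a formal power series in `q = X`
(for `a ≥ 1`, the `n`-th coefficient only depends on the first `n+1` factors). -/
noncomputable def qp (a c : ℕ) : PowerSeries ℚ :=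
  PowerSeries.mk fun n =>
    PowerSeries.coeff n
      (∏ i ∈ Finset.range (n + 1), (1 - (PowerSeries.X : PowerSeries ℚ) ^ (a + c * i)))
/-- The defining condition for the partitions counted by `EObar`: every even part is less
than each odd part, and only the largest even part appears an odd number of times. -/
def EOcond {n : ℕ} (p : n.Partition) : Prop :=
  (∀ a ∈ p.parts, ∀ b ∈ p.parts, Even a → Odd b → a < b) ∧
  (∀ a ∈ p.parts, Even (p.parts.count a) ∨ (Even a ∧ ∀ b ∈ p.parts, Even b → b ≤ a)) ∧
  (∀ a ∈ p.parts, Even a → (∀ b ∈ p.parts, Even b → b ≤ a) → Odd (p.parts.count a))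

/-- `EObar n` counts the partitions of `n` in which every even part is less than each odd
part and only the largest even part appears an odd number of times. -/
noncomputable def EObar (n : ℕ) : ℕ := Nat.card {p : n.Partition // EOcond p}

namespace EOaux
open Finset
noncomputable section

abbrev PS := PowerSeries ℚ

def fprod (a c M : ℕ) : PS := ∏ i ∈ Finset.range M, (1 - (X : PS) ^ (a + c * i))

lemma constCoeff_one_sub_pow {k : ℕ} (hk : 0 < k) :
    constantCoeff (1 - (X : PS) ^ k) = 1 := by
  simp [zero_pow hk.ne']

lemma constCoeff_fprod {a c M : ℕ} (ha : 0 < a) : constantCoeff (fprod a c M) = 1 := by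
  rw [fprod, map_prod]
  rw [Finset.prod_eq_one]
  intro i _
  exact constCoeff_one_sub_pow (by positivity)

lemma coeff_qp (a c n : ℕ) : coeff n (qp a c) = coeff n (fprod a c (n + 1)) :=
  coeff_mk _ _

/-- congruence mod `X^N` -/
def Md (N : ℕ) (f g : PS) : Prop := (X : PS) ^ N ∣ f - g

lemma Md.refl {N : ℕ} (f : PS) : Md N f f := by simp [Md]

lemma Md.symm {N : ℕ} {f g : PS} (h : Md N f g) : Md N g f := by
  simpa [Md, neg_sub] using (dvd_neg.2 h)

lemma Md.trans {N : ℕ} {f g h : PS} (h1 : Md N f g) (h2 : Md N g h) : Md N f h := by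
  have := dvd_add h1 h2
  simpa [Md, sub_add_sub_cancel] using this

lemma Md.mul {N : ℕ} {f g h k : PS} (h1 : Md N f g) (h2 : Md N h k) : Md N (f * h) (g * k) := by
  have : f * h - g * k = f * (h - k) + (f - g) * k := by ring
  rw [Md, this]
  exact dvd_add (Dvd.dvd.mul_left h2 f) (Dvd.dvd.mul_right h1 k)

lemma Md.coeff_eq {N : ℕ} {f g : PS} (h : Md N f g) {m : ℕ} (hm : m < N) :
    coeff m f = coeff m g := by
  have := (PowerSeries.X_pow_dvd_iff.1 h) m hm
  rw [map_sub] at this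
  linarith

lemma md_of_coeff {N : ℕ} {f g : PS} (h : ∀ m < N, coeff m f = coeff m g) : Md N f g := by
  rw [Md, PowerSeries.X_pow_dvd_iff]
  intro m hm
  rw [map_sub, h m hm, sub_self]

lemma eq_of_md {f g : PS} (h : ∀ N, Md N f g) : f = g := by
  ext n
  exact (h (n + 1)).coeff_eq (Nat.lt_succ_self n)

lemma inv_unique {f g : PS} (h : f * g = 1) : f⁻¹ = g := by
  have hf : constantCoeff f ≠ 0 := by
    intro hf0
    have := congrArg (constantCoeff) h
    rw [map_mul, hf0, zero_mul] at this
    simpa using this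
  calc f⁻¹ = f⁻¹ * (f * g) := by rw [h, mul_one]
    _ = (f⁻¹ * f) * g := by ring
    _ = g := by rw [PowerSeries.inv_mul_cancel _ hf, one_mul]

lemma mul_inv_cancel₁ {f : PS} (hf : constantCoeff f = 1) : f * f⁻¹ = 1 :=
  PowerSeries.mul_inv_cancel _ (by rw [hf]; exact one_ne_zero)

lemma constCoeff_inv₁ {f : PS} (hf : constantCoeff f = 1) : constantCoeff f⁻¹ = 1 := by
  have := congrArg (constantCoeff) (mul_inv_cancel₁ hf)
  rw [map_mul, hf, one_mul] at this
  simpa using this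

lemma mul_inv₁ {f g : PS} (hf : constantCoeff f = 1) (hg : constantCoeff g = 1) :
    (f * g)⁻¹ = f⁻¹ * g⁻¹ := by
  apply inv_unique
  calc f * g * (f⁻¹ * g⁻¹) = (f * f⁻¹) * (g * g⁻¹) := by ring
    _ = 1 := by rw [mul_inv_cancel₁ hf, mul_inv_cancel₁ hg, one_mul]

lemma Md.inv {N : ℕ} {f g : PS} (hf : constantCoeff f = 1) (hg : constantCoeff g = 1)
    (h : Md N f g) : Md N f⁻¹ g⁻¹ := by
  have key : f⁻¹ - g⁻¹ = f⁻¹ * (g - f) * g⁻¹ := by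
    have h1 : f * f⁻¹ = 1 := mul_inv_cancel₁ hf
    have h2 : g * g⁻¹ = 1 := mul_inv_cancel₁ hg
    calc f⁻¹ - g⁻¹ = f⁻¹ * (g * g⁻¹) - (f⁻¹ * f) * g⁻¹ := by
          rw [h2, mul_comm f⁻¹ f, h1, mul_one, one_mul]
      _ = f⁻¹ * (g - f) * g⁻¹ := by ring
  rw [Md, key]
  exact Dvd.dvd.mul_right (Dvd.dvd.mul_left (h.symm) f⁻¹) g⁻¹

lemma fprod_succ (a c M : ℕ) : fprod a c (M + 1) = fprod a c M * (1 - (X : PS) ^ (a + c * M)) :=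
  Finset.prod_range_succ _ _

lemma fprod_congr {a c N M M' : ℕ} (hMM' : M ≤ M') (h : ∀ i, M ≤ i → N ≤ a + c * i) :
    Md N (fprod a c M') (fprod a c M) := by
  induction M' with
  | zero => simpa [Nat.le_zero.1 hMM'] using Md.refl (fprod a c 0)
  | succ M' ih =>
    rcases Nat.lt_or_ge M (M' + 1) with hlt | hge
    · have hMM : M ≤ M' := Nat.lt_succ_iff.1 hlt
      have ih' := ih hMM
      have : Md N (fprod a c (M' + 1)) (fprod a c M') := by
        rw [fprod_succ, Md]
        have : fprod a c M' * (1 - (X:PS) ^ (a + c * M')) - fprod a c M' =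
            -(fprod a c M' * (X:PS) ^ (a + c * M')) := by ring
        rw [this]
        apply dvd_neg.2
        apply Dvd.dvd.mul_left
        exact pow_dvd_pow _ (h M' hMM)
      exact this.trans ih'
    · have : M = M' + 1 := le_antisymm hMM' hge
      rw [this]
      exact Md.refl _

lemma qp_congr {a c N M : ℕ} (ha : 0 < a) (hc : 0 < c) (hM : N ≤ M) :
    Md N (qp a c) (fprod a c M) := by
  apply md_of_coeff
  intro m hm
  rw [coeff_qp]
  have h1 : Md (m + 1) (fprod a c M) (fprod a c (m + 1)) := by
    apply fprod_congr (le_trans (Nat.succ_le_of_lt hm) hM)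
    intro i hi
    have hmi : m + 1 ≤ i := hi
    nlinarith
  exact ((h1.symm).coeff_eq (Nat.lt_succ_self m))

/-! ### Infinite sums of series with increasing order -/

/-- formal sum of a family whose `n`-th member has order `≥ n` -/
def SS (u : ℕ → PS) : PS := PowerSeries.mk fun m => ∑ n ∈ Finset.range (m + 1), coeff m (u n)

/-- admissibility: the `n`-th term has no coefficients below degree `n` -/
def Adm (u : ℕ → PS) : Prop := ∀ n m, m < n → coeff m (u n) = 0

lemma coeff_SS {u : ℕ → PS} (hu : Adm u) {m M : ℕ} (hM : m < M) :
    coeff m (SS u) = ∑ n ∈ Finset.range M, coeff m (u n) := by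
  rw [SS, coeff_mk]
  rcases le_or_gt M (m+1) with h | h
  · have : M = m + 1 := le_antisymm h hM
    rw [this]
  · rw [← Finset.sum_range_add_sum_Ico _ (le_of_lt h)]
    have : ∑ n ∈ Finset.Ico (m+1) M, coeff m (u n) = 0 := by
      apply Finset.sum_eq_zero
      intro n hn
      exact hu n m (lt_of_lt_of_le (Nat.lt_succ_self m) (Finset.mem_Ico.1 hn).1)
    rw [this, add_zero]

lemma Adm.mul_left {u : ℕ → PS} (hu : Adm u) (f : PS) : Adm (fun n => f * u n) := by
  intro n m hm
  rw [coeff_mul]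
  apply Finset.sum_eq_zero
  rintro ⟨i, j⟩ hij
  have hj : j ≤ m := by
    have := Finset.HasAntidiagonal.mem_antidiagonal.1 hij
    omega
  rw [hu n j (lt_of_le_of_lt hj hm), mul_zero]

lemma SS_mul {u : ℕ → PS} (hu : Adm u) (f : PS) : f * SS u = SS fun n => f * u n := by
  ext m
  rw [coeff_mul]
  have step : ∀ p ∈ Finset.HasAntidiagonal.antidiagonal m,
      coeff p.1 f * coeff p.2 (SS u) =
      ∑ n ∈ Finset.range (m + 1), coeff p.1 f * coeff p.2 (u n) := by
    rintro ⟨i, j⟩ hij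
    have hj : j < m + 1 := by
      have := Finset.HasAntidiagonal.mem_antidiagonal.1 hij; omega
    rw [coeff_SS hu hj, Finset.mul_sum]
  rw [Finset.sum_congr rfl step, Finset.sum_comm]
  rw [coeff_SS (hu.mul_left f) (Nat.lt_succ_self m)]
  apply Finset.sum_congr rfl
  intro n _
  rw [coeff_mul]

lemma SS_congr {u v : ℕ → PS} (h : ∀ n, u n = v n) : SS u = SS v := by
  unfold SS
  congr 1
  funext m
  exact Finset.sum_congr rfl fun n _ => by rw [h n]

lemma SS_telescope {A : ℕ → PS} (hA : Adm A) (hA0 : A 0 = 0) :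
    SS (fun n => A n - A (n + 1)) = 0 := by
  ext m
  rw [SS, coeff_mk]
  have : ∀ n, coeff m (A n - A (n+1)) = coeff m (A n) - coeff m (A (n+1)) := by
    intro n; rw [map_sub]
  rw [Finset.sum_congr rfl fun n _ => this n, Finset.sum_range_sub']
  simp [hA0, hA (m+1) m (Nat.lt_succ_self m)]

/-! ### the q-series part -/

def po (n : ℕ) : PS := ∏ i ∈ Finset.range n, (1 - (X : PS) ^ (4 * i + 2))
def pe (n : ℕ) : PS := ∏ i ∈ Finset.range n, (1 - (X : PS) ^ (4 * i + 4))

lemma constCoeff_po (n : ℕ) : constantCoeff (po n) = 1 := by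
  rw [po, map_prod, Finset.prod_eq_one]
  intro i _; exact constCoeff_one_sub_pow (by omega)

lemma constCoeff_pe (n : ℕ) : constantCoeff (pe n) = 1 := by
  rw [pe, map_prod, Finset.prod_eq_one]
  intro i _; exact constCoeff_one_sub_pow (by omega)

lemma po_succ (n : ℕ) : po (n + 1) = po n * (1 - (X : PS) ^ (4 * n + 2)) :=
  Finset.prod_range_succ _ _

lemma pe_succ (n : ℕ) : pe (n + 1) = pe n * (1 - (X : PS) ^ (4 * n + 4)) :=
  Finset.prod_range_succ _ _

/-- the term of the `g k` series -/
def gt (k n : ℕ) : PS := (X : PS) ^ ((4 * k + 2) * n) * (po n * (pe n)⁻¹)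

lemma coeff_X_pow_mul_zero {e m : ℕ} (f : PS) (h : m < e) :
    coeff m ((X : PS) ^ e * f) = 0 :=
  PowerSeries.X_pow_dvd_iff.1 (dvd_mul_right _ _) m h

lemma adm_xpow_mul {e : ℕ → ℕ} (he : ∀ n, n ≤ e n) (f : ℕ → PS) :
    Adm (fun n => (X : PS) ^ (e n) * f n) := fun n m hm =>
  coeff_X_pow_mul_zero (f n) (lt_of_lt_of_le hm (he n))

lemma adm_gt (k : ℕ) : Adm (gt k) := by
  apply adm_xpow_mul
  intro n; nlinarith

lemma ps_inv_one : (1 : PS)⁻¹ = 1 := inv_unique (one_mul 1)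

/-- the key coefficient recurrence: `c (n+1) * (1 - X^{4(n+1)}) = c n * (1 - X^{4n+2})` -/
lemma c_rec (n : ℕ) :
    po (n+1) * (pe (n+1))⁻¹ * (1 - (X:PS) ^ (4 * n + 4)) =
    po n * (pe n)⁻¹ * (1 - (X:PS) ^ (4 * n + 2)) := by
  rw [po_succ, pe_succ, mul_inv₁ (constCoeff_pe n) (constCoeff_one_sub_pow (by omega))]
  have h1 : (1 - (X:PS) ^ (4 * n + 4))⁻¹ * (1 - (X:PS) ^ (4 * n + 4)) = 1 := by
    rw [mul_comm]; exact mul_inv_cancel₁ (constCoeff_one_sub_pow (by omega))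
  calc po n * (1 - (X:PS) ^ (4*n+2)) * ((pe n)⁻¹ * (1 - (X:PS)^(4*n+4))⁻¹) * (1 - (X:PS)^(4*n+4))
      = po n * (1 - (X:PS) ^ (4*n+2)) * (pe n)⁻¹ *
        ((1 - (X:PS)^(4*n+4))⁻¹ * (1 - (X:PS)^(4*n+4))) := by ring
    _ = po n * (pe n)⁻¹ * (1 - (X:PS) ^ (4 * n + 2)) := by rw [h1, mul_one]; ring

/-- the functional equation -/
lemma funceq (k : ℕ) :
    (1 - (X:PS) ^ (4 * k + 2)) * SS (gt k) = (1 - (X:PS) ^ (4 * k + 4)) * SS (gt (k + 1)) := by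
  rw [SS_mul (adm_gt k), SS_mul (adm_gt (k+1))]
  have hsub : ∀ (u v : ℕ → PS), SS u - SS v = SS (fun n => u n - v n) := by
    intro u v
    ext m
    rw [map_sub, SS, SS, SS, coeff_mk, coeff_mk, coeff_mk, ← Finset.sum_sub_distrib]
    exact Finset.sum_congr rfl fun n _ => (map_sub _ _ _).symm
  rw [← sub_eq_zero, hsub]
  -- the difference is a telescoping sum
  set A : ℕ → PS := fun n =>
    if n = 0 then 0 else (X:PS) ^ ((4*k+2)*n) * (po (n-1) * (pe (n-1))⁻¹ * (1 - (X:PS)^(4*(n-1)+2)))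
    with hA
  have admA : Adm A := by
    intro n m hm
    by_cases hn : n = 0
    · omega
    · rw [hA]
      simp only [hn, if_false]
      have : (fun n => (X:PS) ^ ((4*k+2)*n) *
          (po (n-1) * (pe (n-1))⁻¹ * (1 - (X:PS)^(4*(n-1)+2)))) n =
          (X:PS) ^ ((4*k+2)*n) * (po (n-1) * (pe (n-1))⁻¹ * (1 - (X:PS)^(4*(n-1)+2))) := rfl
      exact adm_xpow_mul (e := fun n => (4*k+2)*n) (by intro n; nlinarith)
        (fun n => po (n-1) * (pe (n-1))⁻¹ * (1 - (X:PS)^(4*(n-1)+2))) n m hm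
  have hterm : ∀ n, (1 - (X:PS) ^ (4*k+2)) * gt k n - (1 - (X:PS) ^ (4*k+4)) * gt (k+1) n
      = A n - A (n+1) := by
    intro n
    rw [hA]
    simp only [Nat.succ_ne_zero, if_false, Nat.add_sub_cancel]
    rcases Nat.eq_zero_or_pos n with rfl | hn
    · simp only [if_pos rfl, gt, po, pe, Finset.range_zero, Finset.prod_empty, ps_inv_one,
        eq_self_iff_true, if_true]
      ring
    · obtain ⟨m, rfl⟩ : ∃ m, n = m + 1 := ⟨n - 1, by omega⟩
      rw [if_neg (by omega), gt, gt]
      simp only [Nat.add_sub_cancel]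
      rw [← c_rec m]
      ring
  rw [SS_congr hterm, SS_telescope admA (by rw [hA]; simp)]

lemma constCoeff_qp {a c : ℕ} (ha : 0 < a) : constantCoeff (qp a c) = 1 := by
  rw [← coeff_zero_eq_constantCoeff, coeff_qp]
  rw [coeff_zero_eq_constantCoeff]
  exact constCoeff_fprod ha

lemma qp_peel {a : ℕ} (ha : 0 < a) (c : ℕ) (hc : 0 < c) :
    qp a c = (1 - (X : PS) ^ a) * qp (a + c) c := by
  apply eq_of_md
  intro N
  have h1 : Md N (qp a c) (fprod a c (N + 1)) := qp_congr ha hc (Nat.le_succ N)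
  have h2 : fprod a c (N + 1) = (1 - (X : PS) ^ a) * fprod (a + c) c N := by
    rw [fprod, fprod, Finset.prod_range_succ', mul_comm,
      show a + c * 0 = a from by ring]
    congr 1
    exact Finset.prod_congr rfl fun i _ => by
      rw [show a + c * (i + 1) = a + c + c * i from by ring]
  have h3 : Md N (fprod (a + c) c N) (qp (a + c) c) :=
    (qp_congr (by omega) hc (le_refl N)).symm
  rw [h2] at h1
  exact h1.trans ((Md.refl _).mul h3)

/-- peel `a` odd factors: `qp 2 4 = po a * qp (4a+2) 4` -/
lemma qp24_split (a : ℕ) : qp 2 4 = po a * qp (4 * a + 2) 4 := by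
  induction a with
  | zero => simp [po]
  | succ a ih =>
    rw [ih, po_succ, qp_peel (a := 4*a+2) (by omega) 4 (by omega)]
    rw [show 4*a+2+4 = 4*(a+1)+2 from by omega]
    ring

/-- the `g k` series -/
def gk (k : ℕ) : PS := SS (gt k)

lemma gk_one_md (k : ℕ) : Md (4 * k + 2) (gk k) 1 := by
  apply md_of_coeff
  intro m hm
  rw [gk, coeff_SS (adm_gt k) (Nat.lt_succ_self m)]
  have : ∀ n ∈ Finset.range (m + 1), coeff m (gt k n) = if n = 0 then coeff m 1 else 0 := by
    intro n _
    rcases Nat.eq_zero_or_pos n with rfl | hn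
    · simp [gt, po, pe, ps_inv_one]
    · rw [if_neg (by omega), gt]
      rw [coeff_X_pow_mul_zero _ (by nlinarith : m < (4*k+2)*n)]
  rw [Finset.sum_congr rfl this, Finset.sum_ite_eq' (Finset.range (m+1)) 0 (fun _ => coeff m 1)]
  rw [if_pos (Finset.mem_range.2 (by omega))]

lemma qp_one_md {a : ℕ} (ha : 0 < a) (c : ℕ) (hc : 0 < c) : Md a (qp a c) 1 := by
  apply md_of_coeff
  intro m hm
  rw [coeff_qp]
  have h : Md a (fprod a c (m+1)) (fprod a c 0) := by
    apply fprod_congr (Nat.zero_le _)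
    intro i _
    nlinarith
  have h0 : fprod a c 0 = 1 := by simp [fprod]
  rw [h.coeff_eq hm, h0]

/-- the limit argument: `g k * (q^{4k+2};q^4) = (q^{4k+4};q^4)` -/
lemma gk_mul_qp0 : gk 0 * qp 2 4 = qp 4 4 := by
  set H : ℕ → PS := fun k => gk k * qp (4 * k + 2) 4 - qp (4 * k + 4) 4 with hH
  have hrec : ∀ k, H k = (1 - (X:PS) ^ (4 * k + 4)) * H (k + 1) := by
    intro k
    have e1 : qp (4*k+2) 4 = (1 - (X:PS)^(4*k+2)) * qp (4*(k+1)+2) 4 := by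
      rw [show 4*(k+1)+2 = 4*k+2+4 from by ring]
      exact qp_peel (by omega) 4 (by omega)
    have e2 : qp (4*k+4) 4 = (1 - (X:PS)^(4*k+4)) * qp (4*(k+1)+4) 4 := by
      rw [show 4*(k+1)+4 = 4*k+4+4 from by ring]
      exact qp_peel (by omega) 4 (by omega)
    have e3 : (1 - (X:PS) ^ (4 * k + 2)) * gk k = (1 - (X:PS) ^ (4 * k + 4)) * gk (k+1) :=
      funceq k
    rw [hH]
    simp only
    rw [e1, e2]
    calc gk k * ((1 - (X:PS)^(4*k+2)) * qp (4*(k+1)+2) 4) - (1 - (X:PS)^(4*k+4)) * qp (4*(k+1)+4) 4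
        = ((1 - (X:PS)^(4*k+2)) * gk k) * qp (4*(k+1)+2) 4
          - (1 - (X:PS)^(4*k+4)) * qp (4*(k+1)+4) 4 := by ring
      _ = ((1 - (X:PS)^(4*k+4)) * gk (k+1)) * qp (4*(k+1)+2) 4
          - (1 - (X:PS)^(4*k+4)) * qp (4*(k+1)+4) 4 := by rw [e3]
      _ = (1 - (X:PS)^(4*k+4)) * (gk (k+1) * qp (4*(k+1)+2) 4 - qp (4*(k+1)+4) 4) := by ring
  have hord : ∀ k, (X:PS) ^ (4 * k + 2) ∣ H k := by
    intro k
    have h1 : Md (4*k+2) (gk k * qp (4*k+2) 4) 1 := by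
      simpa using (gk_one_md k).mul (qp_one_md (by omega) 4 (by omega))
    have h2 : Md (4*k+2) (qp (4*k+4) 4) 1 := by
      have h := qp_one_md (a := 4*k+4) (by omega) 4 (by omega)
      exact md_of_coeff fun m hm => h.coeff_eq (by omega)
    have : Md (4*k+2) (H k) 0 := by
      apply md_of_coeff
      intro m hm
      simp only [hH, map_sub, map_zero]
      rw [h1.coeff_eq hm, h2.coeff_eq hm]
      simp
    simpa [Md] using this
  have hchain : ∀ k, (X:PS) ^ (4 * k + 2) ∣ H 0 := by
    intro k
    have key : ∀ i j, (X:PS) ^ (4 * k + 2) ∣ H (j + i) → (X:PS) ^ (4 * k + 2) ∣ H j := by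
      intro i
      induction i with
      | zero => intro j h; simpa using h
      | succ i ih =>
        intro j h
        have : j + (i + 1) = (j + 1) + i := by omega
        rw [this] at h
        have := ih (j + 1) h
        rw [hrec j]
        exact Dvd.dvd.mul_left this _
    exact key k 0 (by simpa using hord k)
  have hzero : H 0 = 0 := by
    apply eq_of_md
    intro N
    apply md_of_coeff
    intro m hm
    have hd := hchain N
    have := PowerSeries.X_pow_dvd_iff.1 hd m (by omega)
    simpa using this
  have := hzero
  rw [hH] at this
  simp only at this
  have h24 : gk 0 * qp (4 * 0 + 2) 4 = qp (4 * 0 + 4) 4 := sub_eq_zero.1 this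
  simpa using h24

lemma fprod_22_split (M : ℕ) : fprod 2 2 (2 * M) = fprod 2 4 M * fprod 4 4 M := by
  induction M with
  | zero => simp [fprod]
  | succ M ih =>
    have h2 : 2 * (M + 1) = (2 * M) + 1 + 1 := by ring
    rw [h2, fprod_succ, fprod_succ, fprod_succ, fprod_succ, ih]
    rw [show 2 + 2 * (2 * M) = 2 + 4 * M from by ring,
      show 2 + 2 * (2 * M + 1) = 4 + 4 * M from by ring]
    ring

lemma qp22_split : qp 2 2 = qp 2 4 * qp 4 4 := by
  apply eq_of_md
  intro N
  have h1 : Md N (qp 2 2) (fprod 2 2 (2 * N)) := qp_congr (by omega) (by omega) (by omega)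
  have h2 : Md N (fprod 2 4 N) (qp 2 4) := (qp_congr (by omega) (by omega) (le_refl N)).symm
  have h3 : Md N (fprod 4 4 N) (qp 4 4) := (qp_congr (by omega) (by omega) (le_refl N)).symm
  rw [fprod_22_split] at h1
  exact h1.trans (h2.mul h3)

/-- the term of the Andrews sum -/
def trm (a : ℕ) : PS := (X : PS) ^ (2 * a) * ((pe a)⁻¹ * (qp (4 * a + 2) 4)⁻¹)

lemma adm_trm : Adm trm :=
  adm_xpow_mul (fun a => by omega) _

/-- the Andrews sum -/
def Sq : PS := SS trm

lemma Sq_mul_qp24 : qp 2 4 * Sq = gk 0 := by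
  rw [Sq, SS_mul adm_trm]
  apply SS_congr
  intro a
  rw [trm, gt, qp24_split a]
  have hcan : qp (4 * a + 2) 4 * (qp (4 * a + 2) 4)⁻¹ = 1 :=
    mul_inv_cancel₁ (constCoeff_qp (by omega))
  calc po a * qp (4*a+2) 4 * ((X:PS) ^ (2*a) * ((pe a)⁻¹ * (qp (4*a+2) 4)⁻¹))
      = (X:PS) ^ (2*a) * (po a * (pe a)⁻¹) * (qp (4*a+2) 4 * (qp (4*a+2) 4)⁻¹) := by ring
    _ = (X:PS) ^ ((4*0+2)*a) * (po a * (pe a)⁻¹) := by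
        rw [hcan, mul_one, show (4*0+2)*a = 2*a from by ring]

open Finset
open scoped Classical
universe u
variable {α : Type*}
variable {ι : Type u}

/-- A convenience constructor for the power series whose coefficients indicate a subset. -/
def indicatorSeries (α : Type*) [Semiring α] (s : Set ℕ) : PowerSeries α :=
  PowerSeries.mk fun n => if n ∈ s then 1 else 0

theorem coeff_indicator (s : Set ℕ) [Semiring α] (n : ℕ) :
    coeff n (indicatorSeries α s) = if n ∈ s then 1 else 0 :=
  coeff_mk _ _

theorem coeff_indicator_pos (s : Set ℕ) [Semiring α] (n : ℕ) (h : n ∈ s) :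
    coeff n (indicatorSeries α s) = 1 := by rw [coeff_indicator, if_pos h]

theorem coeff_indicator_neg (s : Set ℕ) [Semiring α] (n : ℕ) (h : n ∉ s) :
    coeff n (indicatorSeries α s) = 0 := by rw [coeff_indicator, if_neg h]

theorem constantCoeff_indicator (s : Set ℕ) [Semiring α] :
    constantCoeff (indicatorSeries α s) = if 0 ∈ s then 1 else 0 :=
  rfl

theorem two_series (i : ℕ) [Semiring α] :
    1 + (X : PowerSeries α) ^ i.succ = indicatorSeries α {0, i.succ} := by
  ext n
  simp only [coeff_indicator, coeff_one, coeff_X_pow, Set.mem_insert_iff, Set.mem_singleton_iff,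
    map_add]
  cases' n with d
  · simp [(Nat.succ_ne_zero i).symm]
  · simp [Nat.succ_ne_zero d]

theorem num_series' [Field α] (i : ℕ) :
    (1 - (X : PowerSeries α) ^ (i + 1))⁻¹ = indicatorSeries α {k | i + 1 ∣ k} := by
  rw [PowerSeries.inv_eq_iff_mul_eq_one]
  · ext n
    cases n with
    | zero => simp [mul_sub, zero_pow, constantCoeff_indicator]
    | succ n =>
      simp only [coeff_one, if_false, mul_sub, mul_one, coeff_indicator,
        LinearMap.map_sub, reduceCtorEq]
      simp_rw [coeff_mul, coeff_X_pow, coeff_indicator, @boole_mul _ _ _ _]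
      simp only [← ite_and, sub_eq_zero]
      erw [sum_boole]
      symm
      split_ifs with h
      · suffices #{a ∈ antidiagonal (n + 1) | i + 1 ∣ a.fst ∧ a.snd = i + 1} = 1 by
          simp only [Set.mem_setOf_eq]; convert congr_arg ((↑) : ℕ → α) this; norm_cast
        rw [card_eq_one]
        cases' h with p hp
        refine ⟨((i + 1) * (p - 1), i + 1), ?_⟩
        ext ⟨a₁, a₂⟩
        simp only [mem_filter, Prod.mk.injEq, HasAntidiagonal.mem_antidiagonal, mem_singleton]
        constructor
        · rintro ⟨a_left, ⟨a, rfl⟩, rfl⟩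
          refine ⟨?_, rfl⟩
          rw [Nat.mul_sub_left_distrib, ← hp, ← a_left, mul_one, Nat.add_sub_cancel]
        · rintro ⟨rfl, rfl⟩
          match p with
          | 0 => rw [mul_zero] at hp; cases hp
          | p + 1 => rw [hp]; simp [mul_add]
      · suffices #{a ∈ antidiagonal (n + 1) | i + 1 ∣ a.fst ∧ a.snd = i + 1} = 0 by
          simp only [Set.mem_setOf_eq]; convert congr_arg ((↑) : ℕ → α) this; norm_cast
        rw [card_eq_zero]
        apply eq_empty_of_forall_notMem
        simp only [Prod.forall, mem_filter, not_and, HasAntidiagonal.mem_antidiagonal]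
        rintro _ h₁ h₂ ⟨a, rfl⟩ rfl
        apply h
        simp [← h₂]
  · simp [zero_pow]

def mkOdd : ℕ ↪ ℕ :=
  ⟨fun i => 2 * i + 1, fun x y h => by linarith⟩

-- The main workhorse of the partition theorem proof.
theorem partialGF_prop (α : Type*) [CommSemiring α] (n : ℕ) (s : Finset ℕ) (hs : ∀ i ∈ s, 0 < i)
    (c : ℕ → Set ℕ) (hc : ∀ i, i ∉ s → 0 ∈ c i) :
    #{p : n.Partition | (∀ j, p.parts.count j ∈ c j) ∧ ∀ j ∈ p.parts, j ∈ s} =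
      coeff n (∏ i ∈ s, indicatorSeries α ((· * i) '' c i)) := by
  simp_rw [coeff_prod, coeff_indicator, prod_boole, sum_boole]
  apply congr_arg
  simp only [mem_univ, forall_true_left, not_and, not_forall, exists_prop,
    Set.mem_image, not_exists]
  set φ : (a : Nat.Partition n) →
    a ∈ filter (fun p ↦ (∀ (j : ℕ), Multiset.count j p.parts ∈ c j) ∧ ∀ j ∈ p.parts, j ∈ s) univ →
    ℕ →₀ ℕ := fun p _ => {
      toFun := fun i => Multiset.count i p.parts • i
      support := Finset.filter (fun i => i ≠ 0) p.parts.toFinset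
      mem_support_toFun := fun a => by
        simp only [smul_eq_mul, ne_eq, mul_eq_zero, Multiset.count_eq_zero]
        rw [not_or, not_not]
        simp only [Multiset.mem_toFinset, not_not, mem_filter] }
  refine Finset.card_bij φ ?_ ?_ ?_
  · intro a ha
    simp only [φ, not_forall, not_exists, not_and, exists_prop, mem_filter]
    rw [mem_finsuppAntidiag]
    dsimp only [ne_eq, smul_eq_mul, id_eq, eq_mpr_eq_cast, le_eq_subset, Finsupp.coe_mk]
    simp only [mem_univ, forall_true_left, not_and, not_forall, exists_prop,
      mem_filter, true_and] at ha
    refine ⟨⟨?_, fun i ↦ ?_⟩, fun i _ ↦ ⟨a.parts.count i, ha.1 i, rfl⟩⟩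
    · conv_rhs => simp [← a.parts_sum]
      rw [sum_multiset_count_of_subset _ s]
      · simp only [smul_eq_mul]
      · intro i
        simp only [Multiset.mem_toFinset, not_not, mem_filter]
        apply ha.2
    · simp only [ne_eq, Multiset.mem_toFinset, not_not, mem_filter, and_imp]
      exact fun hi _ ↦ ha.2 i hi
  · intro p₁ hp₁ p₂ hp₂ h
    apply Nat.Partition.ext
    simp only [true_and, mem_univ, mem_filter] at hp₁ hp₂
    ext i
    simp only [φ, ne_eq, Multiset.mem_toFinset, not_not, smul_eq_mul, Finsupp.mk.injEq] at h
    by_cases hi : i = 0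
    · rw [hi]
      rw [Multiset.count_eq_zero_of_notMem]
      · rw [Multiset.count_eq_zero_of_notMem]
        intro a; exact Nat.lt_irrefl 0 (hs 0 (hp₂.2 0 a))
      intro a; exact Nat.lt_irrefl 0 (hs 0 (hp₁.2 0 a))
    · rw [← mul_left_inj' hi]
      rw [funext_iff] at h
      exact h.2 i
  · simp only [φ, mem_filter, mem_finsuppAntidiag, mem_univ, exists_prop, true_and, and_assoc]
    rintro f ⟨hf, hf₃, hf₄⟩
    have hf' : f ∈ finsuppAntidiag s n := mem_finsuppAntidiag.mpr ⟨hf, hf₃⟩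
    simp only [mem_finsuppAntidiag] at hf'
    refine ⟨⟨∑ i ∈ s, Multiset.replicate (f i / i) i, ?_, ?_⟩, ?_, ?_, ?_⟩
    · intro i hi
      simp only [exists_prop, Multiset.mem_sum, mem_map, Function.Embedding.coeFn_mk] at hi
      rcases hi with ⟨t, ht, z⟩
      apply hs
      rwa [Multiset.eq_of_mem_replicate z]
    · simp_rw [Multiset.sum_sum, Multiset.sum_replicate, Nat.nsmul_eq_mul]
      rw [← hf'.1]
      refine sum_congr rfl fun i hi => Nat.div_mul_cancel ?_
      rcases hf₄ i hi with ⟨w, _, hw₂⟩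
      rw [← hw₂]
      exact dvd_mul_left _ _
    · intro i
      simp_rw [Multiset.count_sum', Multiset.count_replicate, sum_ite_eq']
      split_ifs with h
      · rcases hf₄ i h with ⟨w, hw₁, hw₂⟩
        rwa [← hw₂, Nat.mul_div_cancel _ (hs i h)]
      · exact hc _ h
    · intro i hi
      rw [Multiset.mem_sum] at hi
      rcases hi with ⟨j, hj₁, hj₂⟩
      rwa [Multiset.eq_of_mem_replicate hj₂]
    · ext i
      simp_rw [Multiset.count_sum', Multiset.count_replicate, sum_ite_eq']
      simp only [ne_eq, Multiset.mem_toFinset, not_not, smul_eq_mul, ite_mul,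
        zero_mul, Finsupp.coe_mk]
      split_ifs with h
      · apply Nat.div_mul_cancel
        rcases hf₄ i h with ⟨w, _, hw₂⟩
        apply Dvd.intro_left _ hw₂
      · apply symm
        rw [← Finsupp.notMem_support_iff]
        exact notMem_mono hf'.2 h


/-! ### combinatorial part -/

/-- multiplicity condition sets, classified by the largest even part `2a` -/
def ca (a : ℕ) : ℕ → Set ℕ := fun j =>
  if j = 2 * a ∧ 0 < a then {k | Odd k}
  else if (Even j ∧ j < 2 * a) ∨ (¬Even j ∧ 2 * a < j) then {k | Even k}
  else {0}

/-- largest even part (or `0`) -/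
def mEv {n : ℕ} (p : n.Partition) : ℕ := (p.parts.filter (fun j => Even j)).sup

lemma even_sup (s : Multiset ℕ) : Even ((s.filter (fun j => Even j)).sup) := by
  induction s using Multiset.induction_on with
  | empty => simp
  | cons a t ih =>
    by_cases ha : Even a
    · rw [Multiset.filter_cons_of_pos _ (by simpa using ha), Multiset.sup_cons]
      rcases max_choice a ((t.filter (fun j => Even j)).sup) with h | h <;> rw [h]
      exacts [ha, ih]
    · rw [Multiset.filter_cons_of_neg _ (by simpa using ha)]
      exact ih

lemma sup_mem_of_ne_zero {s : Multiset ℕ} (h : s.sup ≠ 0) : s.sup ∈ s := by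
  induction s using Multiset.induction_on with
  | empty => simp at h
  | cons a t ih =>
    rw [Multiset.sup_cons] at h ⊢
    rcases max_choice a t.sup with h1 | h1 <;> rw [h1]
    · exact Multiset.mem_cons_self a t
    · exact Multiset.mem_cons_of_mem (ih (by rw [h1] at h; exact h))

lemma mEv_even {n : ℕ} (p : n.Partition) : Even (mEv p) := even_sup _

lemma mEv_mem {n : ℕ} {p : n.Partition} (h : mEv p ≠ 0) : mEv p ∈ p.parts ∧ Even (mEv p) := by
  have := sup_mem_of_ne_zero (s := p.parts.filter (fun j => Even j)) h
  rw [Multiset.mem_filter] at this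
  exact ⟨this.1, by simpa [mEv] using this.2⟩

lemma le_mEv {n : ℕ} {p : n.Partition} {j : ℕ} (hj : j ∈ p.parts) (he : Even j) : j ≤ mEv p :=
  Multiset.le_sup (Multiset.mem_filter.2 ⟨hj, by simpa using he⟩)

lemma parts_le {n : ℕ} {p : n.Partition} {j : ℕ} (hj : j ∈ p.parts) : j ≤ n := by
  simpa [p.parts_sum] using Multiset.single_le_sum (fun _ _ => Nat.zero_le _) _ hj

/-- the fiber characterisation -/
lemma fiber_eq {n : ℕ} (a : ℕ) (p : n.Partition) :
    (EOcond p ∧ mEv p = 2 * a) ↔ (∀ j, p.parts.count j ∈ ca a j) := by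
  constructor
  · rintro ⟨⟨h1, h2, h3⟩, hm⟩ j
    rw [ca]
    split_ifs with hb1 hb2
    · -- j = 2a, 0 < a : odd count
      obtain ⟨rfl, hapos⟩ := hb1
      have hne : mEv p ≠ 0 := by omega
      obtain ⟨hmem, _⟩ := mEv_mem hne
      rw [hm] at hmem
      refine h3 _ hmem (even_two_mul a) ?_
      intro b hb hbe
      rw [← hm]
      exact le_mEv hb hbe
    · -- even count
      show Even _
      by_cases hjp : j ∈ p.parts
      · rcases hb2 with ⟨hje, hjlt⟩ | ⟨hjo, hjgt⟩
        · rcases h2 j hjp with h | ⟨_, hmax⟩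
          · exact h
          · exfalso
            have hapos : 0 < a := by omega
            have hne : mEv p ≠ 0 := by omega
            obtain ⟨hmem, hmeme⟩ := mEv_mem hne
            have := hmax _ hmem hmeme
            omega
        · rcases h2 j hjp with h | ⟨hje, _⟩
          · exact h
          · exact absurd hje hjo
      · rw [Multiset.count_eq_zero_of_notMem hjp]
        exact Even.zero
    · -- count zero
      show p.parts.count j ∈ ({0} : Set ℕ)
      rw [Set.mem_singleton_iff, Multiset.count_eq_zero]
      intro hjp
      have hjpos : 0 < j := p.parts_pos hjp
      by_cases hje : Even j
      · have hle : j ≤ 2 * a := by rw [← hm]; exact le_mEv hjp hje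
        have : j < 2 * a ∨ j = 2 * a := by omega
        rcases this with h | rfl
        · exact hb2 (Or.inl ⟨hje, h⟩)
        · exact hb1 ⟨rfl, by omega⟩
      · have hle : j ≤ 2 * a := by
          by_contra hgt
          exact hb2 (Or.inr ⟨hje, by omega⟩)
        have hapos : 0 < a := by omega
        have hne : mEv p ≠ 0 := by omega
        obtain ⟨hmem, hmeme⟩ := mEv_mem hne
        have := h1 _ hmem j hjp hmeme (Nat.not_even_iff_odd.1 hje)
        omega
  · intro h
    -- basic claims
    have clA : ∀ j ∈ p.parts, Even j → (j = 2 * a ∧ 0 < a) ∨ j < 2 * a := by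
      intro j hj hje
      have hc := h j
      rw [ca] at hc
      split_ifs at hc with hb1 hb2
      · exact Or.inl hb1
      · rcases hb2 with ⟨_, hlt⟩ | ⟨hjo, _⟩
        · exact Or.inr hlt
        · exact absurd hje hjo
      · rw [Set.mem_singleton_iff] at hc
        exact absurd (Multiset.count_eq_zero.1 hc) (by simpa using hj)
    have clB : ∀ j ∈ p.parts, ¬Even j → 2 * a < j := by
      intro j hj hjo
      have hc := h j
      rw [ca] at hc
      split_ifs at hc with hb1 hb2
      · exfalso; obtain ⟨rfl, _⟩ := hb1; exact hjo (even_two_mul a)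
      · rcases hb2 with ⟨hje, _⟩ | ⟨_, hgt⟩
        · exact absurd hje hjo
        · exact hgt
      · rw [Set.mem_singleton_iff] at hc
        exact absurd (Multiset.count_eq_zero.1 hc) (by simpa using hj)
    have clC : 0 < a → (2 * a) ∈ p.parts := by
      intro hapos
      have hc := h (2 * a)
      rw [ca, if_pos ⟨rfl, hapos⟩] at hc
      have : p.parts.count (2 * a) ≠ 0 := by
        intro h0
        rw [h0] at hc
        exact (Nat.not_odd_iff_even.2 Even.zero) hc
      exact Multiset.count_ne_zero.1 this
    have hmEv : mEv p = 2 * a := by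
      rcases Nat.eq_zero_or_pos a with rfl | hapos
      · rw [mEv]
        simp only [mul_zero]
        refine Nat.eq_zero_of_le_zero (Multiset.sup_le.2 ?_)
        intro j hj
        rw [Multiset.mem_filter] at hj
        rcases clA j hj.1 (by simpa using hj.2) with ⟨_, h0⟩ | hlt
        · omega
        · omega
      · have hmem := clC hapos
        apply le_antisymm
        · apply Multiset.sup_le.2
          intro j hj
          rw [Multiset.mem_filter] at hj
          rcases clA j hj.1 (by simpa using hj.2) with ⟨rfl, _⟩ | hlt <;> omega
        · exact le_mEv hmem (even_two_mul a)
    refine ⟨⟨?_, ?_, ?_⟩, hmEv⟩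
    · intro x hx b hb hxe hbo
      have h1 := clB b hb (Nat.not_even_iff_odd.2 hbo)
      rcases clA x hx hxe with ⟨rfl, _⟩ | hlt <;> omega
    · intro j hj
      by_cases hje : Even j
      · rcases clA j hj hje with ⟨rfl, hapos⟩ | hlt
        · refine Or.inr ⟨even_two_mul a, ?_⟩
          intro b hb hbe
          rcases clA b hb hbe with ⟨rfl, _⟩ | h <;> omega
        · left
          have hc := h j
          rw [ca, if_neg (by omega), if_pos (Or.inl ⟨hje, hlt⟩)] at hc
          exact hc
      · left
        have hc := h j
        have hgt := clB j hj hje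
        rw [ca, if_neg (by rintro ⟨rfl, _⟩; exact hje (even_two_mul a)),
          if_pos (Or.inr ⟨hje, hgt⟩)] at hc
        exact hc
    · intro j hj hje hmax
      have hjpos := p.parts_pos hj
      have hj2a : j = 2 * a ∧ 0 < a := by
        rcases clA j hj hje with h' | hlt
        · exact h'
        · exfalso
          have hapos : 0 < a := by omega
          have := hmax _ (clC hapos) (even_two_mul a)
          omega
      obtain ⟨rfl, hapos⟩ := hj2a
      have hc := h (2 * a)
      rw [ca, if_pos ⟨rfl, hapos⟩] at hc
      exact hc

/-! ### indicator computations -/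

lemma ind_zero (j : ℕ) : indicatorSeries ℚ ((· * j) '' ({0} : Set ℕ)) = 1 := by
  ext m
  rw [coeff_indicator, coeff_one]
  have h : ((· * j) '' ({0} : Set ℕ)) = {0} := by simp
  rw [h]
  simp [Set.mem_singleton_iff]

lemma ind_even {j : ℕ} (hj : 0 < j) :
    indicatorSeries ℚ ((· * j) '' {k | Even k}) = (1 - (X : PS) ^ (2 * j))⁻¹ := by
  have h2j : 2 * j = (2 * j - 1) + 1 := by omega
  rw [h2j, num_series', ← h2j]
  apply congrArg (fun S => indicatorSeries ℚ S)
  ext m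
  constructor
  · rintro ⟨k, hk, rfl⟩
    obtain ⟨t, rfl⟩ := hk
    exact ⟨t, by show (t + t) * j = 2 * j * t; ring⟩
  · rintro ⟨t, rfl⟩
    exact ⟨2 * t, ⟨t, by ring⟩, by show (2 * t) * j = 2 * j * t; ring⟩

lemma ind_odd {a : ℕ} (ha : 0 < a) :
    indicatorSeries ℚ ((· * (2 * a)) '' {k | Odd k}) =
      (X : PS) ^ (2 * a) * (1 - (X : PS) ^ (4 * a))⁻¹ := by
  have h4a : 4 * a = (4 * a - 1) + 1 := by omega
  rw [h4a, num_series', ← h4a]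
  ext m
  rw [coeff_indicator, PowerSeries.coeff_X_pow_mul', coeff_indicator]
  by_cases hle : 2 * a ≤ m
  · rw [if_pos hle]
    congr 1
    simp only [eq_iff_iff]
    constructor
    · rintro ⟨k, hk, rfl⟩
      obtain ⟨t, rfl⟩ := hk
      refine ⟨t, ?_⟩
      show (2*t+1)*(2*a) - 2*a = 4*a*t
      rw [show (2*t+1)*(2*a) = 4*a*t + 2*a from by ring, Nat.add_sub_cancel]
    · rintro ⟨t, ht⟩
      refine ⟨2 * t + 1, ⟨t, rfl⟩, ?_⟩
      show (2*t+1)*(2*a) = m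
      rw [show (2*t+1)*(2*a) = 4*a*t + 2*a from by ring]
      omega
  · rw [if_neg hle]
    have hnot : m ∉ ((· * (2 * a)) '' {k | Odd k}) := by
      rintro ⟨k, hk, hkm⟩
      obtain ⟨t, rfl⟩ := hk
      have : (2*t+1)*(2*a) = m := hkm
      nlinarith
    rw [if_neg hnot]

/-- inverse of a finset product -/
lemma prod_inv {s : Finset ℕ} {f : ℕ → PS} (h : ∀ i ∈ s, constantCoeff (f i) = 1) :
    ∏ i ∈ s, (f i)⁻¹ = (∏ i ∈ s, f i)⁻¹ := by
  induction s using Finset.cons_induction with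
  | empty => simp [ps_inv_one]
  | cons a s ha ih =>
    rw [Finset.prod_cons, Finset.prod_cons, ih (fun i hi => h i (Finset.mem_cons_of_mem hi))]
    rw [mul_inv₁ (h a (Finset.mem_cons_self a s))]
    rw [map_prod, Finset.prod_eq_one]
    intro i hi
    exact h i (Finset.mem_cons_of_mem hi)

lemma pe_const' (a : ℕ) : constantCoeff (pe a) = 1 := constCoeff_pe a

lemma fprod_const' (a c M : ℕ) (h : 0 < a) : constantCoeff (fprod a c M) = 1 :=
  constCoeff_fprod h

/-- evaluation of the indicator product -/
lemma coeff_prod_eq (n a : ℕ) (ha : a = 0 ∨ 2 * a ≤ n) :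
    coeff n (∏ j ∈ Finset.Ioc 0 n, indicatorSeries ℚ ((· * j) '' ca a j)) =
      coeff n (trm a) := by
  classical
  set s : Finset ℕ := Finset.Ioc 0 n with hs
  set M : ℕ := (n - 2 * a + 1) / 2 with hM
  set c1 : ℕ → Prop := fun j => j = 2 * a ∧ 0 < a with hc1
  set c2 : ℕ → Prop := fun j => (Even j ∧ j < 2 * a) ∨ (¬Even j ∧ 2 * a < j) with hc2
  set ind : ℕ → PS := fun j => indicatorSeries ℚ ((· * j) '' ca a j) with hind
  -- split off the c1 part
  have hsplit1 : ∏ j ∈ s, ind j =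
      (∏ j ∈ s.filter c1, ind j) * ∏ j ∈ s.filter (fun j => ¬ c1 j), ind j :=
    (Finset.prod_filter_mul_prod_filter_not s c1 ind).symm
  have hsplit2 : ∏ j ∈ s.filter (fun j => ¬ c1 j), ind j =
      (∏ j ∈ (s.filter (fun j => ¬ c1 j)).filter c2, ind j) *
        ∏ j ∈ (s.filter (fun j => ¬ c1 j)).filter (fun j => ¬ c2 j), ind j :=
    (Finset.prod_filter_mul_prod_filter_not _ c2 ind).symm
  -- the third product is 1
  have h3 : ∏ j ∈ (s.filter (fun j => ¬ c1 j)).filter (fun j => ¬ c2 j), ind j = 1 := by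
    apply Finset.prod_eq_one
    intro j hj
    rw [Finset.mem_filter, Finset.mem_filter] at hj
    show indicatorSeries ℚ ((· * j) '' ca a j) = 1
    have hca : ca a j = {0} := by rw [ca, if_neg hj.1.2, if_neg hj.2]
    rw [hca]
    exact ind_zero j
  -- the middle filter is just filter c2
  have hmid : (s.filter (fun j => ¬ c1 j)).filter c2 = s.filter c2 := by
    rw [Finset.filter_filter]
    apply Finset.filter_congr
    intro j _
    constructor
    · rintro ⟨_, h⟩; exact h
    · intro h
      refine ⟨?_, h⟩
      rcases h with ⟨_, hlt⟩ | ⟨_, hgt⟩ <;> rintro ⟨rfl, _⟩ <;> omega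
  -- middle product: all even-count factors
  have h2 : ∏ j ∈ s.filter c2, ind j = ∏ j ∈ s.filter c2, (1 - (X:PS) ^ (2 * j))⁻¹ := by
    apply Finset.prod_congr rfl
    intro j hj
    rw [Finset.mem_filter] at hj
    have hj0 : 0 < j := (Finset.mem_Ioc.1 hj.1).1
    show indicatorSeries ℚ ((· * j) '' ca a j) = (1 - (X:PS) ^ (2 * j))⁻¹
    have hca : ca a j = {k | Even k} := by
      rw [ca, if_neg, if_pos hj.2]
      rcases hj.2 with ⟨_, hlt⟩ | ⟨_, hgt⟩ <;> rintro ⟨rfl, _⟩ <;> omega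
    rw [hca, ind_even hj0]
  -- split the middle by parity
  have hsplit3 : ∏ j ∈ s.filter c2, (1 - (X:PS) ^ (2 * j))⁻¹ =
      (∏ j ∈ (s.filter c2).filter (fun j => Even j), (1 - (X:PS) ^ (2 * j))⁻¹) *
        ∏ j ∈ (s.filter c2).filter (fun j => ¬ Even j), (1 - (X:PS) ^ (2 * j))⁻¹ :=
    (Finset.prod_filter_mul_prod_filter_not _ _ _).symm
  have hDE : (s.filter c2).filter (fun j => Even j) =
      (Finset.range (a - 1)).image (fun i => 2 * i + 2) := by
    ext j
    simp only [Finset.mem_filter, Finset.mem_Ioc, Finset.mem_image, Finset.mem_range, hs, hc2]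
    constructor
    · rintro ⟨⟨⟨h0, hn⟩, hcc⟩, he⟩
      rcases hcc with ⟨_, hlt⟩ | ⟨hne, _⟩
      · rw [Nat.even_iff] at he
        exact ⟨(j - 2) / 2, by omega, by omega⟩
      · exact absurd he hne
    · rintro ⟨i, hi, rfl⟩
      have h2an : 2 * a ≤ n := by rcases ha with rfl | h <;> omega
      refine ⟨⟨⟨by omega, by omega⟩, Or.inl ⟨⟨i + 1, by ring⟩, by omega⟩⟩, ⟨i + 1, by ring⟩⟩
  have hDO : (s.filter c2).filter (fun j => ¬ Even j) =
      (Finset.range M).image (fun i => 2 * a + 1 + 2 * i) := by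
    ext j
    simp only [Finset.mem_filter, Finset.mem_Ioc, Finset.mem_image, Finset.mem_range, hs, hc2, hM]
    constructor
    · rintro ⟨⟨⟨h0, hn⟩, hcc⟩, he⟩
      rcases hcc with ⟨hev, _⟩ | ⟨_, hgt⟩
      · exact absurd hev he
      · rw [Nat.not_even_iff] at he
        exact ⟨(j - (2 * a + 1)) / 2, by omega, by omega⟩
    · rintro ⟨i, hi, rfl⟩
      have hno : ¬ Even (2 * a + 1 + 2 * i) := by rw [Nat.not_even_iff]; omega
      exact ⟨⟨⟨by omega, by omega⟩, Or.inr ⟨hno, by omega⟩⟩, hno⟩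
  -- evaluate the two reindexed products
  have hinj2 : ∀ x ∈ Finset.range (a-1), ∀ y ∈ Finset.range (a-1),
      2 * x + 2 = 2 * y + 2 → x = y := by intros; omega
  have hinj3 : ∀ x ∈ Finset.range M, ∀ y ∈ Finset.range M,
      2 * a + 1 + 2 * x = 2 * a + 1 + 2 * y → x = y := by intros; omega
  have hPE : ∏ j ∈ (s.filter c2).filter (fun j => Even j), (1 - (X:PS) ^ (2 * j))⁻¹ =
      (pe (a - 1))⁻¹ := by
    rw [hDE, Finset.prod_image hinj2]
    calc ∏ i ∈ Finset.range (a-1), (1 - (X:PS) ^ (2 * (2 * i + 2)))⁻¹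
        = ∏ i ∈ Finset.range (a-1), (1 - (X:PS) ^ (4 * i + 4))⁻¹ :=
          Finset.prod_congr rfl (fun i _ => by
            rw [show 2 * (2 * i + 2) = 4 * i + 4 from by ring])
      _ = (pe (a-1))⁻¹ := by
          rw [prod_inv (fun i _ => constCoeff_one_sub_pow (by omega))]
          rfl
  have hPO : ∏ j ∈ (s.filter c2).filter (fun j => ¬ Even j), (1 - (X:PS) ^ (2 * j))⁻¹ =
      (fprod (4 * a + 2) 4 M)⁻¹ := by
    rw [hDO, Finset.prod_image hinj3]
    calc ∏ i ∈ Finset.range M, (1 - (X:PS) ^ (2 * (2 * a + 1 + 2 * i)))⁻¹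
        = ∏ i ∈ Finset.range M, (1 - (X:PS) ^ (4 * a + 2 + 4 * i))⁻¹ :=
          Finset.prod_congr rfl (fun i _ => by
            rw [show 2 * (2 * a + 1 + 2 * i) = 4 * a + 2 + 4 * i from by ring])
      _ = (fprod (4 * a + 2) 4 M)⁻¹ := by
          rw [prod_inv (fun i _ => constCoeff_one_sub_pow (by omega))]
          rfl
  -- the c1 product
  have hC1 : ∏ j ∈ s.filter c1, ind j =
      if 0 < a then (X:PS) ^ (2*a) * (1 - (X:PS) ^ (4*a))⁻¹ else 1 := by
    by_cases hap : 0 < a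
    · have h2an : 2 * a ≤ n := by rcases ha with rfl | h <;> omega
      have : s.filter c1 = {2 * a} := by
        ext j
        simp only [Finset.mem_filter, Finset.mem_Ioc, Finset.mem_singleton, hs, hc1]
        constructor
        · rintro ⟨_, rfl, _⟩; rfl
        · rintro rfl; exact ⟨⟨by omega, by omega⟩, rfl, hap⟩
      rw [this, Finset.prod_singleton, if_pos hap, hind]
      show indicatorSeries ℚ ((· * (2 * a)) '' ca a (2 * a)) = _
      have hca : ca a (2 * a) = {k | Odd k} := by rw [ca, if_pos ⟨rfl, hap⟩]
      rw [hca, ind_odd hap]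
    · have : s.filter c1 = ∅ := by
        ext j
        simp only [Finset.mem_filter, Finset.notMem_empty, iff_false, hc1]
        rintro ⟨_, _, h⟩
        exact hap h
      rw [this, Finset.prod_empty, if_neg hap]
  -- assemble into the exact truncated form
  have htot : ∏ j ∈ s, ind j =
      (X:PS) ^ (2*a) * ((pe a)⁻¹ * (fprod (4*a+2) 4 M)⁻¹) := by
    rw [hsplit1, hsplit2, h3, mul_one, hmid, h2, hsplit3, hPE, hPO, hC1]
    by_cases hap : 0 < a
    · rw [if_pos hap]
      have hpe : pe a = pe (a-1) * (1 - (X:PS) ^ (4*a)) := by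
        have : a = (a - 1) + 1 := by omega
        rw [this, pe_succ]
        rw [show 4 * (a-1) + 4 = 4 * ((a-1)+1) from by ring, ← this]
      rw [hpe, mul_inv₁ (constCoeff_pe _) (constCoeff_one_sub_pow (by omega))]
      ring
    · have ha0 : a = 0 := by omega
      subst ha0
      rw [if_neg hap]
      have hpe0 : pe 0 = 1 := by simp [pe]
      simp only [Nat.zero_sub, mul_zero, pow_zero, one_mul, hpe0, ps_inv_one]
  rw [htot, trm]
  -- now replace the truncated product by `qp` mod X^(n+1)
  have hcong : Md (n+1) (fprod (4*a+2) 4 M) (qp (4*a+2) 4) := by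
    have hK : Md (n+1) (qp (4*a+2) 4) (fprod (4*a+2) 4 (M + n + 1)) :=
      qp_congr (by omega) (by omega) (by omega)
    have hK2 : Md (n+1) (fprod (4*a+2) 4 (M + n + 1)) (fprod (4*a+2) 4 M) := by
      apply fprod_congr (by omega)
      intro i hi
      rcases ha with rfl | h <;> omega
    exact (hK.trans hK2).symm
  have hconginv : Md (n+1) (fprod (4*a+2) 4 M)⁻¹ (qp (4*a+2) 4)⁻¹ :=
    hcong.inv (constCoeff_fprod (by omega)) (constCoeff_qp (by omega))
  exact ((Md.refl ((X:PS) ^ (2*a))).mul (((Md.refl ((pe a)⁻¹)).mul hconginv))).coeff_eq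
    (Nat.lt_succ_self n)

lemma card_Q (n a : ℕ) (ha : a = 0 ∨ 2 * a ≤ n) :
    ((Finset.univ.filter
        (fun p : n.Partition => ∀ j, p.parts.count j ∈ ca a j)).card : ℚ) =
      coeff n (trm a) := by
  have hc : ∀ i, i ∉ Finset.Ioc 0 n → 0 ∈ ca a i := by
    intro i hi
    rw [ca]
    split_ifs with h1 h2
    · exfalso
      obtain ⟨rfl, hapos⟩ := h1
      exact hi (Finset.mem_Ioc.2 ⟨by omega, by rcases ha with rfl | h <;> omega⟩)
    · exact Even.zero
    · rfl
  have hGF := partialGF_prop ℚ n (Finset.Ioc 0 n)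
    (fun i hi => (Finset.mem_Ioc.1 hi).1) (ca a) hc
  rw [coeff_prod_eq n a ha] at hGF
  rw [← hGF]
  congr 2
  apply Finset.filter_congr
  intro p _
  constructor
  · intro h
    exact ⟨h, fun j hj => Finset.mem_Ioc.2 ⟨p.parts_pos hj, parts_le hj⟩⟩
  · intro h
    exact h.1

lemma EObar_coeff (n : ℕ) : (EObar n : ℚ) = coeff n Sq := by
  classical
  have h0 : EObar n = (Finset.univ.filter (fun p : n.Partition => EOcond p)).card := by
    rw [EObar, Nat.card_eq_fintype_card]
    exact Fintype.card_subtype _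
  have hfib : ∀ p : n.Partition, mEv p / 2 ∈ Finset.range (n + 1) := by
    intro p
    rw [Finset.mem_range]
    rcases Nat.eq_zero_or_pos (mEv p) with h | h
    · omega
    · have hle : mEv p ≤ n := parts_le (mEv_mem h.ne').1
      omega
  have h1 : (Finset.univ.filter (fun p : n.Partition => EOcond p)).card =
      ∑ a ∈ Finset.range (n + 1),
        ((Finset.univ.filter (fun p : n.Partition => EOcond p)).filter
          (fun p => mEv p / 2 = a)).card :=
    Finset.card_eq_sum_card_fiberwise (fun p _ => hfib p)
  have h2 : ∀ a, (((Finset.univ.filter (fun p : n.Partition => EOcond p)).filter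
      (fun p => mEv p / 2 = a)).card : ℚ) = coeff n (trm a) := by
    intro a
    have heq : (Finset.univ.filter (fun p : n.Partition => EOcond p)).filter
        (fun p => mEv p / 2 = a) =
        Finset.univ.filter (fun p : n.Partition => EOcond p ∧ mEv p = 2 * a) := by
      rw [Finset.filter_filter]
      apply Finset.filter_congr
      intro p _
      have he := mEv_even p
      obtain ⟨t, ht⟩ := he
      constructor
      · rintro ⟨hc, hd⟩
        exact ⟨hc, by omega⟩
      · rintro ⟨hc, hd⟩
        exact ⟨hc, by omega⟩
    rw [heq]
    by_cases ha : a = 0 ∨ 2 * a ≤ n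
    · have heq2 : Finset.univ.filter (fun p : n.Partition => EOcond p ∧ mEv p = 2 * a) =
          Finset.univ.filter (fun p : n.Partition => ∀ j, p.parts.count j ∈ ca a j) :=
        Finset.filter_congr (fun p _ => fiber_eq a p)
      rw [heq2]
      exact card_Q n a ha
    · push_neg at ha
      have hempty : Finset.univ.filter
          (fun p : n.Partition => EOcond p ∧ mEv p = 2 * a) = ∅ := by
        apply Finset.eq_empty_of_forall_notMem
        intro p hp
        rw [Finset.mem_filter] at hp
        obtain ⟨_, _, hm⟩ := hp
        have hne : mEv p ≠ 0 := by omega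
        have := parts_le (mEv_mem hne).1
        omega
      rw [hempty, trm]
      rw [coeff_X_pow_mul_zero _ (by omega : n < 2 * a)]
      simp
  rw [h0, h1, Sq, coeff_SS adm_trm (Nat.lt_succ_self n)]
  push_cast
  exact Finset.sum_congr rfl (fun a _ => h2 a)

end
end EOaux

/-- Andrews: `∑_{n≥0} EObar(n) qⁿ = (q⁴;q⁴)_∞³ / (q²;q²)_∞²`. -/
theorem EObar_generating_function :
    PowerSeries.mk (fun n => (EObar n : ℚ)) = qp 4 4 ^ 3 * (qp 2 2 ^ 2)⁻¹ := by
  have hSq : PowerSeries.mk (fun n => (EObar n : ℚ)) = EOaux.Sq := by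
    ext n
    rw [coeff_mk]
    exact EOaux.EObar_coeff n
  have key : EOaux.Sq * qp 2 2 ^ 2 = qp 4 4 ^ 3 := by
    rw [EOaux.qp22_split]
    calc EOaux.Sq * (qp 2 4 * qp 4 4) ^ 2
        = ((qp 2 4 * EOaux.Sq) * qp 2 4) * qp 4 4 ^ 2 := by ring
      _ = (EOaux.gk 0 * qp 2 4) * qp 4 4 ^ 2 := by rw [EOaux.Sq_mul_qp24]
      _ = qp 4 4 ^ 3 := by rw [EOaux.gk_mul_qp0]; ring
  have hunit : constantCoeff (qp 2 2 ^ 2) ≠ 0 := by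
    rw [map_pow, EOaux.constCoeff_qp (by omega)]
    norm_num
  rw [hSq, ← key, mul_assoc, PowerSeries.mul_inv_cancel _ hunit, mul_one]
end

section
/- The generating function of EO-bar satisfies ∑_{n≥0} EO-bar(n) q^n ≡ (q;q)_∞^8 (mod 2), i.e., the coefficients of the two power series agree modulo 2. -/
open PowerSeries

/-- version of `qp` over an arbitrary commutative ring. -/
noncomputable def qpR (R : Type*) [CommRing R] (a c : ℕ) : PowerSeries R :=
  PowerSeries.mk fun n =>
    PowerSeries.coeff (R := R) n
      (∏ i ∈ Finset.range (n + 1), (1 - (PowerSeries.X : PowerSeries R) ^ (a + c * i)))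

lemma qp_eq_qpR (a c : ℕ) : qp a c = qpR ℚ a c := rfl

/-- stability of the partial products -/
lemma coeff_prod_stable {R : Type*} [CommRing R] (a c : ℕ) (ha : 1 ≤ a) (hc : 1 ≤ c)
    (n N : ℕ) (hN : n < N) :
    PowerSeries.coeff (R := R) n (∏ i ∈ Finset.range N,
        (1 - (PowerSeries.X : PowerSeries R) ^ (a + c * i)))
      = PowerSeries.coeff (R := R) n (qpR R a c) := by
  induction N, hN using Nat.le_induction with
  | base => simp [qpR]
  | succ N hN ih =>
    rw [Finset.prod_range_succ, mul_sub, mul_one, map_sub, ih,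
      PowerSeries.coeff_mul_X_pow']
    have : ¬ (a + c * N ≤ n) := by nlinarith
    simp [this]

lemma coeff_qpR {R : Type*} [CommRing R] (a c n : ℕ) :
    PowerSeries.coeff (R := R) n (qpR R a c) =
      PowerSeries.coeff (R := R) n (∏ i ∈ Finset.range (n + 1),
        (1 - (PowerSeries.X : PowerSeries R) ^ (a + c * i))) := by
  simp [qpR]

lemma map_qpR {R S : Type*} [CommRing R] [CommRing S] (f : R →+* S) (a c : ℕ) :
    PowerSeries.map f (qpR R a c) = qpR S a c := by
  ext n
  rw [PowerSeries.coeff_map, coeff_qpR, coeff_qpR, ← PowerSeries.coeff_map]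
  congr 1
  rw [map_prod]
  congr 1
  ext i
  rw [map_sub, map_one, map_pow, PowerSeries.map_X]

lemma constantCoeff_qpR {R : Type*} [CommRing R] (a c : ℕ) (ha : 1 ≤ a) :
    PowerSeries.constantCoeff (R := R) (qpR R a c) = 1 := by
  have h := coeff_qpR (R := R) a c 0
  rw [← PowerSeries.coeff_zero_eq_constantCoeff, h]
  have : a + c * 0 ≠ 0 := by omega
  simp only [PowerSeries.coeff_zero_eq_constantCoeff, map_prod, map_sub, map_one, map_pow]
  rw [Finset.prod_range_one]
  have hX : PowerSeries.constantCoeff (R := R) X = 0 := PowerSeries.constantCoeff_X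
  rw [hX, zero_pow this, sub_zero]

/-- In characteristic 2, `(q^a;q^c)² = (q^{2a};q^{2c})`. -/
lemma qpR_sq (a c : ℕ) (ha : 1 ≤ a) (hc : 1 ≤ c) :
    (qpR (ZMod 2) a c) ^ 2 = qpR (ZMod 2) (2 * a) (2 * c) := by
  ext n
  set P : PowerSeries (ZMod 2) :=
    ∏ i ∈ Finset.range (n + 1), (1 - (PowerSeries.X : PowerSeries (ZMod 2)) ^ (a + c * i))
  have hsq : PowerSeries.coeff (R := (ZMod 2)) n ((qpR (ZMod 2) a c) ^ 2)
      = PowerSeries.coeff (R := (ZMod 2)) n (P ^ 2) := by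
    rw [pow_two, pow_two, PowerSeries.coeff_mul, PowerSeries.coeff_mul]
    refine Finset.sum_congr rfl fun p hp => ?_
    have h1 : p.1 < n + 1 := Nat.lt_succ_of_le (Finset.HasAntidiagonal.antidiagonal.fst_le hp)
    have h2 : p.2 < n + 1 := Nat.lt_succ_of_le (Finset.HasAntidiagonal.antidiagonal.snd_le hp)
    rw [← coeff_prod_stable a c ha hc p.1 (n + 1) h1,
      ← coeff_prod_stable a c ha hc p.2 (n + 1) h2]
  rw [hsq]
  have hP : P ^ 2 = ∏ i ∈ Finset.range (n + 1),
      (1 - (PowerSeries.X : PowerSeries (ZMod 2)) ^ (2 * a + 2 * c * i)) := by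
    rw [← Finset.prod_pow]
    refine Finset.prod_congr rfl fun i _ => ?_
    have h2 : (2 : PowerSeries (ZMod 2)) = 0 := by
      have hC : ((PowerSeries.C (R := ZMod 2)) 2 : PowerSeries (ZMod 2)) = 2 := map_ofNat _ 2
      rw [← hC, show (2 : ZMod 2) = 0 from rfl, map_zero]
    have hexp : 2 * a + 2 * c * i = (a + c * i) * 2 := by ring
    rw [hexp, pow_mul]
    set y : PowerSeries (ZMod 2) := PowerSeries.X ^ (a + c * i) with hy
    linear_combination (y * y - y) * h2
  rw [hP]
  exact coeff_prod_stable (2 * a) (2 * c) (by omega) (by omega) n (n + 1) (Nat.lt_succ_self n)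

lemma map_injective' {R S : Type*} [CommRing R] [CommRing S] (f : R →+* S)
    (hf : Function.Injective f) : Function.Injective (PowerSeries.map f) := by
  intro p q h
  ext n
  apply hf
  rw [← PowerSeries.coeff_map, ← PowerSeries.coeff_map, h]

/-- `∑ EObar(n) qⁿ ≡ (q;q)_∞⁸ (mod 2)`: the coefficients agree modulo 2. -/
theorem EObar_cong_mod_two (EObar : ℕ → ℕ)
    (hEO : PowerSeries.mk (fun n => (EObar n : ℚ)) = qp 4 4 ^ 3 * (qp 2 2 ^ 2)⁻¹) :
    ∀ n : ℕ, ∃ m : ℤ,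
      (EObar n : ℚ) - PowerSeries.coeff n (qp 1 1 ^ 8) = 2 * m := by
  -- Step 1: clear the inverse over ℚ
  have hconst : PowerSeries.constantCoeff (R := ℚ) (qp 2 2 ^ 2) ≠ 0 := by
    rw [qp_eq_qpR, map_pow, constantCoeff_qpR 2 2 (by norm_num)]
    norm_num
  have hQ : PowerSeries.mk (fun n => (EObar n : ℚ)) * qp 2 2 ^ 2 = qp 4 4 ^ 3 := by
    rw [hEO, mul_assoc, PowerSeries.inv_mul_cancel _ hconst, mul_one]
  -- Step 2: descend to ℤ
  have hZQ : Function.Injective ((Int.castRingHom ℚ)) := fun a b h => by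
    simpa using h
  have hZ : PowerSeries.mk (fun n => (EObar n : ℤ)) * qpR ℤ 2 2 ^ 2 = qpR ℤ 4 4 ^ 3 := by
    apply map_injective' (Int.castRingHom ℚ) hZQ
    rw [map_mul, map_pow, map_pow, map_qpR, map_qpR, ← qp_eq_qpR, ← qp_eq_qpR]
    have hmk : PowerSeries.map (Int.castRingHom ℚ) (PowerSeries.mk fun n => (EObar n : ℤ))
        = PowerSeries.mk (fun n => (EObar n : ℚ)) := by
      ext n
      simp [PowerSeries.coeff_map]
    rw [hmk, hQ]
  -- Step 3: reduce mod 2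
  have h2 : PowerSeries.mk (fun n => ((EObar n : ℤ) : ZMod 2)) * qpR (ZMod 2) 2 2 ^ 2
      = qpR (ZMod 2) 4 4 ^ 3 := by
    have := congrArg (PowerSeries.map (Int.castRingHom (ZMod 2))) hZ
    rw [map_mul, map_pow, map_pow, map_qpR, map_qpR] at this
    have hmk : PowerSeries.map (Int.castRingHom (ZMod 2))
          (PowerSeries.mk fun n => (EObar n : ℤ))
        = PowerSeries.mk (fun n => ((EObar n : ℤ) : ZMod 2)) := by
      ext n
      simp [PowerSeries.coeff_map]
    rwa [hmk] at this
  -- Step 4: use Frobenius identities in char 2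
  have hsq22 : qpR (ZMod 2) 2 2 ^ 2 = qpR (ZMod 2) 4 4 := by
    simpa using qpR_sq 2 2 (by norm_num) (by norm_num)
  have hsq11 : qpR (ZMod 2) 1 1 ^ 2 = qpR (ZMod 2) 2 2 := by
    simpa using qpR_sq 1 1 le_rfl le_rfl
  have hne : qpR (ZMod 2) 4 4 ≠ 0 := by
    intro h
    have := constantCoeff_qpR (R := ZMod 2) 4 4 (by norm_num)
    rw [h, map_zero] at this
    exact one_ne_zero this.symm
  have hfinal : PowerSeries.mk (fun n => ((EObar n : ℤ) : ZMod 2))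
      = qpR (ZMod 2) 1 1 ^ 8 := by
    have h3 : PowerSeries.mk (fun n => ((EObar n : ℤ) : ZMod 2)) * qpR (ZMod 2) 4 4
        = qpR (ZMod 2) 4 4 ^ 2 * qpR (ZMod 2) 4 4 := by
      calc PowerSeries.mk (fun n => ((EObar n : ℤ) : ZMod 2)) * qpR (ZMod 2) 4 4
          = PowerSeries.mk (fun n => ((EObar n : ℤ) : ZMod 2)) * qpR (ZMod 2) 2 2 ^ 2 := by
            rw [hsq22]
        _ = qpR (ZMod 2) 4 4 ^ 3 := h2
        _ = qpR (ZMod 2) 4 4 ^ 2 * qpR (ZMod 2) 4 4 := by ring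
    have hcancel := mul_right_cancel₀ hne h3
    rw [hcancel, ← hsq22, ← hsq11]
    ring
  -- Step 5: extract the coefficient congruence
  intro n
  have hcoe : ((EObar n : ℤ) : ZMod 2)
      = ((PowerSeries.coeff (R := ℤ) n (qpR ℤ 1 1 ^ 8) : ℤ) : ZMod 2) := by
    have := congrArg (PowerSeries.coeff (R := (ZMod 2)) n) hfinal
    rw [PowerSeries.coeff_mk] at this
    rw [this]
    have hmap : PowerSeries.map (Int.castRingHom (ZMod 2)) (qpR ℤ 1 1 ^ 8)
        = qpR (ZMod 2) 1 1 ^ 8 := by rw [map_pow, map_qpR]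
    rw [← hmap, PowerSeries.coeff_map]
    rfl
  have hdvd : (2 : ℤ) ∣ ((EObar n : ℤ) - PowerSeries.coeff (R := ℤ) n (qpR ℤ 1 1 ^ 8)) := by
    have : (((EObar n : ℤ) - PowerSeries.coeff (R := ℤ) n (qpR ℤ 1 1 ^ 8) : ℤ) : ZMod 2) = 0 := by
      rw [Int.cast_sub, hcoe, sub_self]
    exact (ZMod.intCast_zmod_eq_zero_iff_dvd _ 2).mp this
  obtain ⟨m, hm⟩ := hdvd
  refine ⟨m, ?_⟩
  have hcoeffQ : PowerSeries.coeff (R := ℚ) n (qp 1 1 ^ 8)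
      = ((PowerSeries.coeff (R := ℤ) n (qpR ℤ 1 1 ^ 8) : ℤ) : ℚ) := by
    rw [qp_eq_qpR, ← map_qpR (Int.castRingHom ℚ), ← map_pow, PowerSeries.coeff_map]
    rfl
  rw [hcoeffQ]
  have := congrArg (fun z : ℤ => (z : ℚ)) hm
  push_cast at this ⊢
  linarith
end
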